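/- arXiv:1602.00244 — 2 statements merged into one kernel-verified Lean document; each statement's English description precedes it below -/
import Mathlib

section
/- Let n ≥ 1 and κ ≥ 1 be integers, with κ ≥ 2 if p = 2, and set λ = κ + ⌊log_p n⌋. Let g, ḡ, h ∈ ℤ_p⟦t⟧ with h having constant term 1, and suppose the coefficient of t^i in Y(g) lies in ℤ_p for all 0 ≤ i ≤ n. If the coefficient of t^i in ḡ - g lies in p^λℤ_p for all i < n, and the coefficients of t^i in ḡ and g agree for all i ≥ n, then Y(ḡ) ≡ Y(g) (mod (p^κ, t^{n+1})), i.e. the coefficient of t^i in Y(ḡ) - Y(g) lies in p^κℤ_p for all 0 ≤ i ≤ n. -/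
open PowerSeries

/-- Composition `h(u)` of formal power series, intended for `u` with zero constant term. -/
noncomputable def pcomp {R : Type*} [CommSemiring R] (h u : R⟦X⟧) : R⟦X⟧ :=
  PowerSeries.mk fun n => ∑ i ∈ Finset.range (n + 1), coeff i h * coeff n (u ^ i)

/-- Formal integral: the unique `F` with `F' = f` and `F(0) = 0`. -/
noncomputable def pint {K : Type*} [Field K] (f : K⟦X⟧) : K⟦X⟧ :=
  PowerSeries.mk fun n => if n = 0 then 0 else coeff (n - 1) f / (n : K)

open Finset

variable {R : Type*} [CommRing R]

lemma coeff_derivativeFun' (f : R⟦X⟧) (n : ℕ) :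
    coeff n (derivativeFun f) = coeff (n + 1) f * (n + 1) := coeff_derivative f n

lemma derivativeFun_C' (r : R) : derivativeFun (C r) = 0 := derivative_C

lemma coeff_pow_eq_zero' {u : R⟦X⟧} (hu : constantCoeff u = 0) {i m : ℕ} (h : i < m) :
    coeff i (u ^ m) = 0 := by
  have hdvd : (X : R⟦X⟧) ^ m ∣ u ^ m := pow_dvd_pow_of_dvd (X_dvd_iff.mpr hu) m
  exact (X_pow_dvd_iff.mp hdvd) i h

lemma coeff_eval_map (P : Polynomial R) {u : R⟦X⟧} (hu : constantCoeff u = 0) (i : ℕ) :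
    coeff i ((P.map C).eval u) = ∑ m ∈ range (i+1), P.coeff m * coeff i (u^m) := by
  rw [Polynomial.eval_eq_sum_range' (lt_of_le_of_lt (Polynomial.natDegree_map_le)
      (Nat.lt_succ_of_le (le_max_left P.natDegree i))), map_sum]
  have : ∀ m ∈ range (max P.natDegree i + 1),
      coeff i ((P.map C).coeff m * u ^ m) = P.coeff m * coeff i (u ^ m) := by
    intro m _
    rw [Polynomial.coeff_map, coeff_C_mul]
  rw [Finset.sum_congr rfl this]
  symm
  apply Finset.sum_subset
  · intro x hx
    simp only [mem_range] at hx ⊢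
    omega
  · intro x _ hx
    simp only [mem_range, not_lt] at hx
    rw [coeff_pow_eq_zero' hu (by omega), mul_zero]

lemma coeff_pcomp (f u : R⟦X⟧) (i : ℕ) :
    coeff i (pcomp f u) = ∑ m ∈ range (i+1), coeff m f * coeff i (u^m) := by
  simp [pcomp]

lemma coeff_pcomp_eq_eval {u : R⟦X⟧} (hu : constantCoeff u = 0) (f : R⟦X⟧) {i N : ℕ}
    (hiN : i < N) :
    coeff i (pcomp f u) = coeff i (((trunc N f).map C).eval u) := by
  rw [coeff_pcomp, coeff_eval_map _ hu]
  apply Finset.sum_congr rfl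
  intro m hm
  simp only [mem_range] at hm
  rw [coeff_trunc]
  rw [if_pos (by omega)]

lemma pcomp_one (u : R⟦X⟧) : pcomp (1 : R⟦X⟧) u = 1 := by
  ext i
  rw [coeff_pcomp]
  rw [Finset.sum_eq_single 0]
  · simp
  · intro m _ hm
    rw [coeff_one, if_neg hm, zero_mul]
  · simp

lemma pcomp_mul {u : R⟦X⟧} (hu : constantCoeff u = 0) (f g : R⟦X⟧) :
    pcomp (f * g) u = pcomp f u * pcomp g u := by
  ext i
  rw [coeff_pcomp_eq_eval hu (f*g) (Nat.lt_succ_self i), coeff_mul]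
  have : ∀ x ∈ antidiagonal i, coeff x.1 (pcomp f u) * coeff x.2 (pcomp g u)
      = coeff x.1 (((trunc (i+1) f).map C).eval u)
        * coeff x.2 (((trunc (i+1) g).map C).eval u) := by
    intro x hx
    have hx' := Finset.HasAntidiagonal.mem_antidiagonal.mp hx
    rw [coeff_pcomp_eq_eval hu f (N := i+1) (by omega), coeff_pcomp_eq_eval hu g (N := i+1) (by omega)]
  rw [Finset.sum_congr rfl this, ← coeff_mul, ← Polynomial.eval_mul, ← Polynomial.map_mul]
  rw [coeff_eval_map _ hu, coeff_eval_map _ hu]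
  apply Finset.sum_congr rfl
  intro m hm
  simp only [mem_range] at hm
  congr 1
  rw [coeff_trunc, if_pos (by omega), Polynomial.coeff_mul, coeff_mul]
  apply Finset.sum_congr rfl
  intro x hx
  have hx' := Finset.HasAntidiagonal.mem_antidiagonal.mp hx
  rw [coeff_trunc, coeff_trunc, if_pos (by omega), if_pos (by omega)]

lemma derivativeFun_eval_map (P : Polynomial R) (u : R⟦X⟧) :
    derivativeFun ((P.map C).eval u)
      = ((P.derivative.map C).eval u) * derivativeFun u := by
  induction P using Polynomial.induction_on' with
  | add p q hp hq =>
    rw [Polynomial.map_add, Polynomial.eval_add, derivativeFun_add, hp, hq,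
      map_add, Polynomial.map_add, Polynomial.eval_add, add_mul]
  | monomial m a =>
    rw [Polynomial.map_monomial, Polynomial.eval_monomial, Polynomial.derivative_monomial,
      Polynomial.map_monomial, Polynomial.eval_monomial]
    have hpow : derivativeFun (u ^ m) = (m : R⟦X⟧) * (u ^ (m - 1) * derivativeFun u) := by
      have h := Derivation.leibniz_pow (PowerSeries.derivative R) u m
      have hco : ∀ v : R⟦X⟧, (PowerSeries.derivative R) v = derivativeFun v := fun _ => rfl
      rw [hco, hco] at h
      simpa [smul_eq_mul, nsmul_eq_mul, mul_assoc] using h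
    rw [derivativeFun_mul, derivativeFun_C', hpow]
    simp only [smul_eq_mul, smul_zero, add_zero, map_mul, map_natCast]
    ring

lemma derivativeFun_pcomp {u : R⟦X⟧} (hu : constantCoeff u = 0) (f : R⟦X⟧) :
    derivativeFun (pcomp f u) = pcomp (derivativeFun f) u * derivativeFun u := by
  ext i
  have hL : coeff i (derivativeFun (pcomp f u))
      = coeff i (((Polynomial.derivative (trunc (i+2) f)).map C).eval u
          * derivativeFun u) := by
    rw [coeff_derivativeFun', coeff_pcomp_eq_eval hu f (N := i+2) (by omega),
      ← coeff_derivativeFun', derivativeFun_eval_map]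
  rw [hL, coeff_mul, coeff_mul]
  apply Finset.sum_congr rfl
  intro x hx
  have hx' := Finset.HasAntidiagonal.mem_antidiagonal.mp hx
  rw [coeff_pcomp_eq_eval hu (derivativeFun f) (N := i+1) (by omega)]
  have hpoly : Polynomial.derivative (trunc (i+2) f) = trunc (i+1) (derivativeFun f) := by
    apply Polynomial.ext
    intro m
    rw [Polynomial.coeff_derivative, coeff_trunc, coeff_trunc]
    by_cases hm : m < i + 1
    · rw [if_pos (by omega), if_pos hm, coeff_derivativeFun']
    · rw [if_neg (by omega), if_neg hm, zero_mul]
  rw [hpoly]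

variable {K : Type*} [Field K] [CharZero K]

lemma derivativeFun_pint (f : K⟦X⟧) : derivativeFun (pint f) = f := by
  ext i
  rw [coeff_derivativeFun']
  simp only [pint, coeff_mk, Nat.succ_ne_zero, if_false, Nat.add_sub_cancel]
  push_cast
  rw [div_mul_cancel₀]
  exact Nat.cast_add_one_ne_zero i

lemma constantCoeff_pint (f : K⟦X⟧) : constantCoeff (pint f) = 0 := by
  rw [← coeff_zero_eq_constantCoeff]
  simp [pint]

lemma constantCoeff_pcomp {u : R⟦X⟧} (hu : constantCoeff u = 0) (f : R⟦X⟧) :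
    constantCoeff (pcomp f u) = coeff 0 f := by
  rw [← coeff_zero_eq_constantCoeff, coeff_pcomp]
  simp

section Padics
variable {p : ℕ} [hp : Fact p.Prime]

lemma usum {ι : Type*} (s : Finset ι) (f : ι → ℚ_[p]) {C : ℝ} (hC : 0 ≤ C)
    (h : ∀ i ∈ s, ‖f i‖ ≤ C) : ‖∑ i ∈ s, f i‖ ≤ C :=
  IsUltrametricDist.norm_sum_le_of_forall_le_of_nonneg hC h

lemma qnorm_nat_le_one (m : ℕ) : ‖(m : ℚ_[p])‖ ≤ 1 := by
  have := Padic.norm_int_le_one (p := p) (m : ℤ)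
  simpa using this

lemma inv_coeff_norm_le (h : ℚ_[p]⟦X⟧) (hh1 : constantCoeff h = 1)
    (hint : ∀ i, ‖coeff i h‖ ≤ 1) : ∀ i, ‖coeff i h⁻¹‖ ≤ 1 := by
  intro i
  induction i using Nat.strong_induction_on with
  | _ i IH =>
    rw [PowerSeries.coeff_inv]
    by_cases hi : i = 0
    · rw [if_pos hi, hh1, inv_one]; norm_num
    · rw [if_neg hi, hh1, inv_one, neg_one_mul, norm_neg]
      apply usum _ _ zero_le_one
      intro x hx
      have hx' := Finset.HasAntidiagonal.mem_antidiagonal.mp hx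
      by_cases h2 : x.2 < i
      · rw [if_pos h2]
        calc ‖coeff x.1 h * coeff x.2 h⁻¹‖
            = ‖coeff x.1 h‖ * ‖coeff x.2 h⁻¹‖ := norm_mul _ _
          _ ≤ 1 * 1 := mul_le_mul (hint _) (IH _ h2) (norm_nonneg _) zero_le_one
          _ = 1 := one_mul 1
      · rw [if_neg h2]; norm_num

lemma coeff_mul_norm_le (f g : ℚ_[p]⟦X⟧) {c d : ℝ} (hc : 0 ≤ c) (hd : 0 ≤ d)
    (hf : ∀ a, ‖coeff a f‖ ≤ c) (hg : ∀ a, ‖coeff a g‖ ≤ d) :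
    ∀ a, ‖coeff a (f * g)‖ ≤ c * d := by
  intro a
  rw [coeff_mul]
  apply usum _ _ (mul_nonneg hc hd)
  intro x _
  rw [norm_mul]
  exact mul_le_mul (hf _) (hg _) (norm_nonneg _) hc

lemma coeff_pow_norm_le (f : ℚ_[p]⟦X⟧) {c : ℝ} (hc : 0 ≤ c)
    (hf : ∀ a, ‖coeff a f‖ ≤ c) (k : ℕ) :
    ∀ a, ‖coeff a (f ^ k)‖ ≤ c ^ k := by
  induction k with
  | zero =>
    intro a
    rw [pow_zero, pow_zero]
    rcases Nat.eq_zero_or_pos a with rfl | ha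
    · simp
    · rw [PowerSeries.coeff_one, if_neg (by omega)]; norm_num
  | succ k IH =>
    intro a
    rw [pow_succ, pow_succ]
    exact coeff_mul_norm_le _ _ (pow_nonneg hc k) hc IH hf a

lemma coeff_pow_norm_le_one (y : ℚ_[p]⟦X⟧) (n : ℕ) (hy : ∀ a ≤ n, ‖coeff a y‖ ≤ 1) :
    ∀ (j : ℕ), ∀ a ≤ n, ‖coeff a (y ^ j)‖ ≤ 1 := by
  intro j
  induction j with
  | zero =>
    intro a _
    rcases Nat.eq_zero_or_pos a with rfl | ha
    · simp
    · rw [pow_zero, PowerSeries.coeff_one, if_neg (by omega)]; norm_num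
  | succ j IH =>
    intro a ha
    rw [pow_succ, coeff_mul]
    apply usum _ _ zero_le_one
    intro x hx
    have hx' := Finset.HasAntidiagonal.mem_antidiagonal.mp hx
    rw [norm_mul]
    calc ‖coeff x.1 (y^j)‖ * ‖coeff x.2 y‖
        ≤ 1 * 1 := mul_le_mul (IH _ (by omega)) (hy _ (by omega)) (norm_nonneg _) zero_le_one
      _ = 1 := one_mul 1

lemma qnorm_nat_inv (m : ℕ) (hm : m ≠ 0) :
    ‖((m : ℚ_[p]))⁻¹‖ = (p : ℝ) ^ ((padicValNat p m : ℤ)) := by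
  have hm' : (m : ℚ_[p]) ≠ 0 := Nat.cast_ne_zero.mpr hm
  rw [norm_inv, Padic.norm_eq_zpow_neg_valuation hm', Padic.valuation_natCast, ← zpow_neg, neg_neg]

lemma padicValNat_le_log {m n : ℕ} (hm : m ≠ 0) (hmn : m ≤ n) :
    padicValNat p m ≤ Nat.log p n := by
  have hdvd : p ^ padicValNat p m ∣ m := pow_padicValNat_dvd
  have hle : p ^ padicValNat p m ≤ n := le_trans (Nat.le_of_dvd (Nat.pos_of_ne_zero hm) hdvd) hmn
  exact (Nat.le_log_iff_pow_le hp.out.one_lt (by omega)).mpr hle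

lemma padicValNat_le_self_mul {k κ : ℕ} (hk : 1 ≤ k) (hκ : 1 ≤ κ) :
    padicValNat p k ≤ (k - 1) * κ := by
  have hdvd : p ^ padicValNat p k ∣ k := pow_padicValNat_dvd
  have h1 : p ^ padicValNat p k ≤ k := Nat.le_of_dvd (by omega) hdvd
  have h2 : k ≤ 2 ^ (k - 1) := by
    have := Nat.lt_two_pow_self (n := k - 1)
    omega
  have h3 : (2:ℕ) ^ (k-1) ≤ p ^ ((k-1) * κ) := by
    calc (2:ℕ) ^ (k-1) ≤ p ^ (k-1) := Nat.pow_le_pow_left hp.out.two_le _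
      _ ≤ p ^ ((k-1)*κ) := Nat.pow_le_pow_right hp.out.pos (by nlinarith)
  exact (Nat.pow_le_pow_iff_right hp.out.one_lt).mp (le_trans h1 (le_trans h2 h3))

end Padics

set_option maxHeartbeats 1000000 in
/-- stability of the solution `Y(g)` under perturbation of `g` modulo
`(p^λ, t^n)` with `λ = κ + ⌊log_p n⌋`: the solutions agree modulo `(p^κ, t^{n+1})`.
Membership `x ∈ p^κ ℤ_p` is expressed as `‖x‖ ≤ p^{-κ}`, and `f ∈ ℤ_p⟦t⟧` as
`‖coeff i f‖ ≤ 1` for all `i`. -/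
theorem stmt9 (p : ℕ) [hp : Fact p.Prime] (n κ : ℕ) (hn : 1 ≤ n) (hκ : 1 ≤ κ)
    (hκ2 : p = 2 → 2 ≤ κ)
    (g gbar h : PowerSeries ℚ_[p])
    (hg : ∀ i, ‖coeff i g‖ ≤ 1) (hgbar : ∀ i, ‖coeff i gbar‖ ≤ 1)
    (hhint : ∀ i, ‖coeff i h‖ ≤ 1) (hh1 : constantCoeff h = 1)
    (y ybar : PowerSeries ℚ_[p])
    (hy0 : constantCoeff y = 0) (hy : derivativeFun y = g * pcomp h y)
    (hybar0 : constantCoeff ybar = 0) (hybar : derivativeFun ybar = gbar * pcomp h ybar)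
    (hyint : ∀ i ≤ n, ‖coeff i y‖ ≤ 1)
    (hdiff : ∀ i < n,
      ‖coeff i (gbar - g)‖ ≤ (p : ℝ) ^ (-((κ + Nat.log p n : ℕ) : ℤ)))
    (heq : ∀ i ≥ n, coeff i gbar = coeff i g) :
    ∀ i ≤ n, ‖coeff i (ybar - y)‖ ≤ (p : ℝ) ^ (-(κ : ℤ)) := by
  have hp1 : (1:ℝ) < p := by exact_mod_cast hp.out.one_lt
  have hp0 : (0:ℝ) < p := lt_trans zero_lt_one hp1
  set H : ℚ_[p]⟦X⟧ := h⁻¹ with hH_def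
  have hH1 : constantCoeff H = 1 := by
    rw [hH_def, PowerSeries.constantCoeff_inv, hh1, inv_one]
  have hHint : ∀ i, ‖coeff i H‖ ≤ 1 := inv_coeff_norm_le h hh1 hhint
  have hh0ne : constantCoeff h ≠ 0 := by rw [hh1]; exact one_ne_zero
  have hHh : H * h = 1 := PowerSeries.inv_mul_cancel h hh0ne
  set Φ : ℚ_[p]⟦X⟧ := pint H with hΦ_def
  have hext : ∀ F G : ℚ_[p]⟦X⟧, derivativeFun F = derivativeFun G →
      constantCoeff F = constantCoeff G → F = G := fun F G h1 h2 =>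
    PowerSeries.derivative.ext h1 h2
  have hsol : ∀ z gz, constantCoeff z = 0 → derivativeFun z = gz * pcomp h z →
      pcomp Φ z = pint gz := by
    intro z gz hz0 hz
    apply hext
    · rw [derivativeFun_pcomp hz0, derivativeFun_pint, derivativeFun_pint, hz,
        show pcomp H z * (gz * pcomp h z) = gz * (pcomp H z * pcomp h z) from by ring,
        ← pcomp_mul hz0, hHh, pcomp_one, mul_one]
    · rw [constantCoeff_pcomp hz0, constantCoeff_pint]
      simp [hΦ_def, pint]
  have hkey1 : pcomp Φ y = pint g := hsol y g hy0 hy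
  have hkey2 : pcomp Φ ybar = pint gbar := hsol ybar gbar hybar0 hybar
  set e : ℚ_[p]⟦X⟧ := ybar - y with he_def
  have he0 : constantCoeff e = 0 := by
    rw [he_def, map_sub, hybar0, hy0, sub_zero]
  set Q : Polynomial ℚ_[p]⟦X⟧ := (trunc (n+1) Φ).map PowerSeries.C with hQ_def
  set Ty : Polynomial ℚ_[p]⟦X⟧ := Polynomial.taylor y Q with hTy_def
  have hQdeg : Q.natDegree < n + 1 :=
    lt_of_le_of_lt Polynomial.natDegree_map_le (natDegree_trunc_lt Φ n)
  have htay : ∀ i ≤ n, coeff i (pint gbar - pint g)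
      = ∑ k ∈ Finset.Icc 1 n, coeff i (Ty.coeff k * e ^ k) := by
    intro i hi
    rw [map_sub, ← hkey1, ← hkey2,
      coeff_pcomp_eq_eval hybar0 Φ (N := n+1) (by omega),
      coeff_pcomp_eq_eval hy0 Φ (N := n+1) (by omega)]
    have h1 : Polynomial.eval ybar Q = Polynomial.eval e Ty := by
      rw [hTy_def, he_def, Polynomial.taylor_eval_sub]
    have h2 : Polynomial.eval e Ty = ∑ k ∈ Finset.range (n+1), Ty.coeff k * e ^ k :=
      Polynomial.eval_eq_sum_range'
        (by rw [hTy_def, Polynomial.natDegree_taylor]; exact hQdeg) e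
    have h3 : Polynomial.eval y Q = Ty.coeff 0 := (Polynomial.taylor_coeff_zero y Q).symm
    have hsplit : Finset.range (n+1) = insert 0 (Finset.Icc 1 n) := by
      ext x; simp; omega
    rw [h1, h2, h3, hsplit, Finset.sum_insert (by simp), pow_zero, mul_one,
      map_add, add_sub_cancel_left, map_sum]
  have hTkf : ∀ k, 1 ≤ k → ∀ a : ℕ,
      coeff a (Ty.coeff k) = (k : ℚ_[p])⁻¹ *
        ∑ j ∈ Finset.range (n+1),
          (if j + k ≤ n then (((j+k-1).choose (k-1) : ℚ_[p]) * coeff (j+k-1) H) else 0)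
            * coeff a (y ^ j) := by
    intro k hk a
    obtain ⟨k', rfl⟩ : ∃ k', k = k' + 1 := ⟨k - 1, by omega⟩
    have hTyk : Ty.coeff (k'+1) = (Polynomial.hasseDeriv (k'+1) Q).eval y := by
      rw [hTy_def, Polynomial.taylor_coeff]
    rw [hTyk, Polynomial.eval_eq_sum_range'
      (lt_of_le_of_lt ((Polynomial.natDegree_hasseDeriv_le _ _).trans (Nat.sub_le _ _)) hQdeg), map_sum, Finset.mul_sum]
    apply Finset.sum_congr rfl
    intro j hj
    rw [Polynomial.hasseDeriv_coeff, Polynomial.coeff_map, coeff_trunc]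
    by_cases hjk : j + (k'+1) ≤ n
    · rw [if_pos (by omega)]
      have hΦc : coeff (j + (k'+1)) Φ
          = coeff (j+k') H / ((j+k'+1 : ℕ) : ℚ_[p]) := by
        rw [hΦ_def]
        simp only [pint, coeff_mk]
        rw [if_neg (by omega)]
        congr 1
      rw [hΦc, if_pos hjk]
      have hcast : ((j + (k'+1)).choose (k'+1) : ℚ_[p]⟦X⟧)
          = PowerSeries.C ((j + (k'+1)).choose (k'+1) : ℚ_[p]) := by
        rw [map_natCast]
      rw [hcast, ← map_mul, coeff_C_mul, ← mul_assoc, ← mul_assoc]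
      congr 1
      -- scalar identity
      have hnat : ((j+k'+1) * (j+k').choose k' : ℕ) = ((j+k'+1).choose (k'+1)) * (k'+1) :=
        Nat.add_one_mul_choose_eq (j+k') k'
      have h1 : ((j+k'+1 : ℕ) : ℚ_[p]) ≠ 0 := Nat.cast_ne_zero.mpr (by omega)
      have h2 : ((k'+1 : ℕ) : ℚ_[p]) ≠ 0 := Nat.cast_ne_zero.mpr (by omega)
      simp only [Nat.add_sub_cancel]
      have hnatc : ((j+k'+1 : ℕ) : ℚ_[p]) * ((j+k').choose k' : ℚ_[p])
          = ((j+k'+1).choose (k'+1) : ℚ_[p]) * ((k'+1 : ℕ) : ℚ_[p]) := by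
        exact_mod_cast congrArg (Nat.cast : ℕ → ℚ_[p]) hnat
      have key : (((j + k' + 1).choose (k' + 1) : ℕ) : ℚ_[p]) / ((j+k'+1 : ℕ) : ℚ_[p])
          = (((k'+1 : ℕ) : ℚ_[p]))⁻¹ * (((j + k').choose k' : ℕ) : ℚ_[p]) := by
        rw [div_eq_iff h1, inv_mul_eq_div, div_mul_eq_mul_div, eq_div_iff h2]
        linear_combination -hnatc
      calc (((j + k' + 1).choose (k' + 1) : ℕ) : ℚ_[p]) * (coeff (j + k') H / ↑(j + k' + 1))
          = ((((j + k' + 1).choose (k' + 1) : ℕ) : ℚ_[p]) / ↑(j+k'+1)) * coeff (j+k') H := by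
            ring
        _ = ((((k'+1 : ℕ) : ℚ_[p]))⁻¹ * (((j + k').choose k' : ℕ) : ℚ_[p])) * coeff (j+k') H := by
            rw [key]
        _ = (↑(k' + 1))⁻¹ * ↑((j + k').choose k') * coeff (j+k') H := by norm_cast
    · rw [if_neg (by omega), if_neg hjk]
      simp
  have hypows : ∀ (j : ℕ), ∀ a ≤ n, ‖coeff a (y^j)‖ ≤ 1 := coeff_pow_norm_le_one y n hyint
  have hTknorm : ∀ k, 1 ≤ k → ∀ a ≤ n,
      ‖coeff a (Ty.coeff k)‖ ≤ (p:ℝ)^((padicValNat p k : ℤ)) := by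
    intro k hk a ha
    rw [hTkf k hk a, norm_mul, qnorm_nat_inv k (by omega)]
    have hsum : ‖∑ j ∈ Finset.range (n+1),
        (if j + k ≤ n then (((j+k-1).choose (k-1) : ℚ_[p]) * coeff (j+k-1) H) else 0)
          * coeff a (y ^ j)‖ ≤ 1 := by
      apply usum _ _ zero_le_one
      intro j _
      by_cases hjk : j + k ≤ n
      · rw [if_pos hjk, norm_mul, norm_mul]
        have h1 : ‖(((j+k-1).choose (k-1) : ℕ) : ℚ_[p])‖ ≤ 1 := qnorm_nat_le_one _
        have h2 := hHint (j+k-1)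
        have h3 := hypows j a ha
        exact mul_le_one₀ (mul_le_one₀ h1 (norm_nonneg _) h2) (norm_nonneg _) h3
      · rw [if_neg hjk, zero_mul, norm_zero]; exact zero_le_one
    calc (p:ℝ)^((padicValNat p k : ℤ)) * ‖_‖ ≤ (p:ℝ)^((padicValNat p k : ℤ)) * 1 :=
          mul_le_mul_of_nonneg_left hsum (zpow_nonneg (le_of_lt hp0) _)
      _ = (p:ℝ)^((padicValNat p k : ℤ)) := mul_one _
  have hT1c0 : coeff 0 (Ty.coeff 1) = 1 := by
    rw [hTkf 1 le_rfl 0]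
    rw [Finset.sum_eq_single 0]
    · rw [if_pos (by omega)]
      simp only [pow_zero, Nat.choose_self, Nat.cast_one]
      rw [← coeff_zero_eq_constantCoeff] at hH1
      simp [hH1]
    · intro j _ hj
      have : coeff 0 (y ^ j) = 0 := by
        rw [coeff_zero_eq_constantCoeff, map_pow, hy0, zero_pow hj]
      rw [this, mul_zero]
    · intro habs
      exact absurd (Finset.mem_range.mpr (by omega)) habs
  have hεb : ∀ i, 1 ≤ i → i ≤ n →
      ‖coeff i (pint gbar - pint g)‖ ≤ (p:ℝ)^(-(κ:ℤ)) := by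
    intro i hi1 hi2
    have hc : coeff i (pint gbar - pint g)
        = coeff (i-1) (gbar - g) * ((i:ℚ_[p]))⁻¹ := by
      rw [map_sub]
      simp only [pint, coeff_mk]
      rw [if_neg (by omega), if_neg (by omega), div_sub_div_same, div_eq_mul_inv, ← map_sub]
    rw [hc, norm_mul, qnorm_nat_inv i (by omega)]
    have hv : padicValNat p i ≤ Nat.log p n := padicValNat_le_log (by omega) hi2
    calc ‖coeff (i-1) (gbar - g)‖ * (p:ℝ)^((padicValNat p i : ℤ))
        ≤ (p:ℝ)^(-((κ + Nat.log p n : ℕ) : ℤ)) * (p:ℝ)^((Nat.log p n : ℤ)) := by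
          apply mul_le_mul (hdiff (i-1) (by omega))
            (zpow_le_zpow_right₀ (le_of_lt hp1) (by exact_mod_cast hv))
            (zpow_nonneg (le_of_lt hp0) _) (zpow_nonneg (le_of_lt hp0) _)
      _ = (p:ℝ)^(-(κ:ℤ)) := by
          rw [← zpow_add₀ (ne_of_gt hp0)]
          congr 1
          push_cast
          ring
  -- main strong induction
  intro i
  induction i using Nat.strong_induction_on with
  | _ i IH =>
    intro hi
    have hP0 : (0:ℝ) ≤ (p:ℝ)^(-(κ:ℤ)) := le_of_lt (zpow_pos hp0 _)
    rcases Nat.eq_zero_or_pos i with rfl | hipos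
    · have h0 : coeff 0 e = 0 := by rw [coeff_zero_eq_constantCoeff]; exact he0
      rw [h0, norm_zero]
      exact hP0
    · have hkey := htay i hi
      have hsplit : Finset.Icc 1 n = insert 1 (Finset.Icc 2 n) := by
        ext x; simp; omega
      rw [hsplit, Finset.sum_insert (by simp)] at hkey
      have hmul : coeff i (Ty.coeff 1 * e ^ 1)
          = (∑ x ∈ (Finset.HasAntidiagonal.antidiagonal i).erase (0, i),
              coeff x.1 (Ty.coeff 1) * coeff x.2 e) + coeff i e := by
        rw [pow_one, coeff_mul,
          ← Finset.sum_erase_add _ _ ((Finset.HasAntidiagonal.mem_antidiagonal (a := ((0:ℕ), i))).mpr (zero_add i)), hT1c0, one_mul]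
      have hei : coeff i e = coeff i (pint gbar - pint g)
          - ∑ k ∈ Finset.Icc 2 n, coeff i (Ty.coeff k * e ^ k)
          - ∑ x ∈ (Finset.HasAntidiagonal.antidiagonal i).erase (0, i),
              coeff x.1 (Ty.coeff 1) * coeff x.2 e := by
        rw [hkey, hmul]; ring
      -- the truncated series etr
      set etr : ℚ_[p]⟦X⟧ := PowerSeries.mk (fun j => if j < i then coeff j e else 0)
        with hetr_def
      have he00 : coeff 0 e = 0 := by rw [coeff_zero_eq_constantCoeff]; exact he0
      have h0etr : constantCoeff etr = 0 := by
        rw [← coeff_zero_eq_constantCoeff, hetr_def, coeff_mk]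
        split <;> simp [he00]
      have hetrb : ∀ a, ‖coeff a etr‖ ≤ (p:ℝ)^(-(κ:ℤ)) := by
        intro a
        rw [hetr_def, coeff_mk]
        split
        · exact IH a (by omega) (by omega)
        · rw [norm_zero]; exact hP0
      have hdiffz : ∀ k, 2 ≤ k → ∀ b ≤ i,
          coeff b (e^k) = coeff b (etr^k) := by
        intro k hk2 b hb
        have hz : coeff b ((∑ r ∈ Finset.range k, e^r * etr^(k-1-r)) * (e - etr)) = 0 := by
          rw [coeff_mul]
          apply Finset.sum_eq_zero
          intro x hx
          have hxs := Finset.HasAntidiagonal.mem_antidiagonal.mp hx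
          by_cases hd : x.2 < i
          · have hz2 : coeff x.2 (e - etr) = 0 := by
              rw [map_sub, hetr_def, coeff_mk, if_pos hd, sub_self]
            rw [hz2, mul_zero]
          · have hx1 : x.1 = 0 := by omega
            have hz1 : coeff x.1 (∑ r ∈ Finset.range k, e^r * etr^(k-1-r)) = 0 := by
              rw [hx1, coeff_zero_eq_constantCoeff, map_sum]
              apply Finset.sum_eq_zero
              intro r _
              rw [map_mul, map_pow, map_pow, he0, h0etr]
              rcases Nat.eq_zero_or_pos r with rfl | hr'
              · rw [zero_pow (show k-1-0 ≠ 0 by omega), mul_zero]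
              · rw [zero_pow (show r ≠ 0 by omega), zero_mul]
            rw [hz1, zero_mul]
        rw [geom_sum₂_mul, map_sub] at hz
        exact sub_eq_zero.mp hz
      have hpowtr : ∀ (k : ℕ) (a : ℕ), ‖coeff a (etr^k)‖ ≤ ((p:ℝ)^(-(κ:ℤ)))^k :=
        fun k a => coeff_pow_norm_le etr hP0 hetrb k a
      -- bound b2
      have b2 : ‖∑ k ∈ Finset.Icc 2 n, coeff i (Ty.coeff k * e ^ k)‖
          ≤ (p:ℝ)^(-(κ:ℤ)) := by
        apply usum _ _ hP0
        intro k hk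
        have hk2 : 2 ≤ k := (Finset.mem_Icc.mp hk).1
        have hkn : k ≤ n := (Finset.mem_Icc.mp hk).2
        rw [coeff_mul]
        apply usum _ _ hP0
        intro x hx
        have hxs := Finset.HasAntidiagonal.mem_antidiagonal.mp hx
        rw [norm_mul, hdiffz k hk2 x.2 (by omega)]
        have h1 : ‖coeff x.1 (Ty.coeff k)‖ ≤ (p:ℝ)^((padicValNat p k : ℤ)) :=
          hTknorm k (by omega) x.1 (by omega)
        have h2 : ‖coeff x.2 (etr^k)‖ ≤ ((p:ℝ)^(-(κ:ℤ)))^k := hpowtr k x.2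
        calc ‖coeff x.1 (Ty.coeff k)‖ * ‖coeff x.2 (etr^k)‖
            ≤ (p:ℝ)^((padicValNat p k : ℤ)) * ((p:ℝ)^(-(κ:ℤ)))^k :=
              mul_le_mul h1 h2 (norm_nonneg _) (zpow_nonneg (le_of_lt hp0) _)
          _ ≤ (p:ℝ)^(-(κ:ℤ)) := by
              rw [← zpow_natCast ((p:ℝ)^(-(κ:ℤ))) k, ← zpow_mul, ← zpow_add₀ (ne_of_gt hp0)]
              apply zpow_le_zpow_right₀ (le_of_lt hp1)
              have hvk : padicValNat p k ≤ (k-1)*κ := padicValNat_le_self_mul (by omega) hκ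
              have hvk' : (padicValNat p k : ℤ) ≤ (((k-1)*κ : ℕ) : ℤ) := Int.ofNat_le.mpr hvk
              have hcast : (((k-1)*κ : ℕ) : ℤ) = ((k:ℤ) - 1) * (κ:ℤ) := by
                push_cast [Nat.cast_sub (show 1 ≤ k by omega)]
                ring
              rw [hcast] at hvk'
              nlinarith [hvk']
      -- bound b3
      have b3 : ‖∑ x ∈ (Finset.HasAntidiagonal.antidiagonal i).erase (0, i),
          coeff x.1 (Ty.coeff 1) * coeff x.2 e‖ ≤ (p:ℝ)^(-(κ:ℤ)) := by
        apply usum _ _ hP0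
        intro x hx
        obtain ⟨hne, hmem⟩ := Finset.mem_erase.mp hx
        have hxs := Finset.HasAntidiagonal.mem_antidiagonal.mp hmem
        have hx2 : x.2 < i := by
          rcases Nat.lt_or_ge x.2 i with hlt | hge
          · exact hlt
          · exfalso
            apply hne
            have h2 : x.2 = i := by omega
            have h1 : x.1 = 0 := by omega
            exact Prod.ext h1 h2
        have hT1 : ‖coeff x.1 (Ty.coeff 1)‖ ≤ 1 := by
          have := hTknorm 1 le_rfl x.1 (by omega)
          simpa [padicValNat.one] using this
        calc ‖coeff x.1 (Ty.coeff 1) * coeff x.2 e‖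
            = ‖coeff x.1 (Ty.coeff 1)‖ * ‖coeff x.2 e‖ := norm_mul _ _
          _ ≤ 1 * ((p:ℝ)^(-(κ:ℤ))) :=
              mul_le_mul hT1 (IH x.2 hx2 (by omega)) (norm_nonneg _) zero_le_one
          _ = (p:ℝ)^(-(κ:ℤ)) := one_mul _
      have b1 : ‖coeff i (pint gbar - pint g)‖ ≤ (p:ℝ)^(-(κ:ℤ)) := hεb i hipos hi
      rw [hei]
      have n1 : ‖coeff i (pint gbar - pint g)
          - ∑ k ∈ Finset.Icc 2 n, coeff i (Ty.coeff k * e ^ k)‖ ≤ (p:ℝ)^(-(κ:ℤ)) := by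
        rw [sub_eq_add_neg]
        refine le_trans (Padic.nonarchimedean _ _) (max_le b1 ?_)
        rw [norm_neg]; exact b2
      rw [sub_eq_add_neg]
      refine le_trans (Padic.nonarchimedean _ _) (max_le n1 ?_)
      rw [norm_neg]; exact b3
end

section
/- Let g₁, g₂ ∈ K⟦t⟧ and n ≥ 1. If g₁ ≡ g₂ (mod t^n), then Y(g₁) ≡ Y(g₂) (mod t^{n+1}); that is, the first n + 1 coefficients of the solution Y(g) depend only on the first n coefficients of g. -/
open PowerSeries

lemma pcomp_congr {K : Type*} [Field K] (h u₁ u₂ : K⟦X⟧) (k : ℕ)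
    (hd : (X : K⟦X⟧) ^ k ∣ u₁ - u₂) : (X : K⟦X⟧) ^ k ∣ pcomp h u₁ - pcomp h u₂ := by
  rw [X_pow_dvd_iff]
  intro m hm
  simp only [map_sub, pcomp, coeff_mk]
  rw [sub_eq_zero]
  refine Finset.sum_congr rfl fun i _ => ?_
  have h2 : (X : K⟦X⟧) ^ k ∣ u₁ ^ i - u₂ ^ i :=
    dvd_trans hd (sub_dvd_pow_sub_pow u₁ u₂ i)
  rw [X_pow_dvd_iff] at h2
  have := h2 m hm
  rw [map_sub, sub_eq_zero] at this
  rw [this]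

/-- if `g₁ ≡ g₂ (mod t^n)` then `Y(g₁) ≡ Y(g₂) (mod t^{n+1})`: the first
`n + 1` coefficients of the solution of `y' = g·h(y)`, `y(0) = 0` depend only on the first
`n` coefficients of `g`. -/
theorem stmt16 {K : Type*} [Field K] [CharZero K] (g₁ g₂ h y₁ y₂ : K⟦X⟧)
    (hh : constantCoeff h = 1)
    (hy₁0 : constantCoeff y₁ = 0) (hy₁ : derivativeFun y₁ = g₁ * pcomp h y₁)
    (hy₂0 : constantCoeff y₂ = 0) (hy₂ : derivativeFun y₂ = g₂ * pcomp h y₂)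
    (n : ℕ) (hn : 1 ≤ n)
    (hcong : ∀ i < n, coeff i g₁ = coeff i g₂) :
    ∀ i < n + 1, coeff i y₁ = coeff i y₂ := by
  have hgd : (X : K⟦X⟧) ^ n ∣ g₁ - g₂ := by
    rw [X_pow_dvd_iff]
    intro m hm
    rw [map_sub, sub_eq_zero]
    exact hcong m hm
  have key : ∀ k, k ≤ n + 1 → (X : K⟦X⟧) ^ k ∣ y₁ - y₂ := by
    intro k
    induction k with
    | zero => intro _; simp
    | succ k ih =>
      intro hk
      have hk' : k ≤ n := Nat.succ_le_succ_iff.mp hk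
      have hyd := ih (le_trans (Nat.le_succ k) hk)
      have hder : (X : K⟦X⟧) ^ k ∣ derivativeFun y₁ - derivativeFun y₂ := by
        rw [hy₁, hy₂]
        have heq : g₁ * pcomp h y₁ - g₂ * pcomp h y₂
            = g₁ * (pcomp h y₁ - pcomp h y₂) + (g₁ - g₂) * pcomp h y₂ := by ring
        rw [heq]
        exact dvd_add ((pcomp_congr h y₁ y₂ k hyd).mul_left g₁)
          ((dvd_trans (pow_dvd_pow _ hk') hgd).mul_right _)
      rw [X_pow_dvd_iff] at hder ⊢
      intro m hm
      rw [map_sub, sub_eq_zero]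
      match m with
      | 0 =>
        simp only [coeff_zero_eq_constantCoeff]
        rw [hy₁0, hy₂0]
      | j + 1 =>
        have hj : j < k := Nat.succ_lt_succ_iff.mp hm
        have := hder j hj
        rw [map_sub, sub_eq_zero] at this
        change coeff j (derivative K y₁) = coeff j (derivative K y₂) at this
        rw [coeff_derivative, coeff_derivative] at this
        have hne : ((j : K) + 1) ≠ 0 := Nat.cast_add_one_ne_zero j
        exact mul_right_cancel₀ hne this
  intro i hi
  have := (X_pow_dvd_iff.mp (key (n + 1) le_rfl)) i hi
  rw [map_sub, sub_eq_zero] at this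
  exact this
end
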